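/- Let λ = a + ib be a complex number and σ ∈ E a unit vector with σ ≠ ω. Then (a²+b²+1) + (a²+b²−1)⟨σ,ω⟩ > 0 and f_λ⁺(σ) := Φ⁻¹(F_λ(Φ(σ))) = [(a²+b²+1) + (a²+b²−1)⟨σ,ω⟩]⁻¹ · ( 2aσ − 2b(σ×ω) − 2a⟨σ,ω⟩ω + [(a²+b²−1) + (a²+b²+1)⟨σ,ω⟩]ω ). -/

import Mathlib

open scoped RealInnerProductSpace

/-- The stereographic projection of the unit sphere of `E` from the point `ω` onto the plane
`ω^⊥`: `Φ(σ) = (σ − ⟨σ,ω⟩ω)/(1 − ⟨σ,ω⟩)`. -/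
noncomputable def sproj {E : Type*} [NormedAddCommGroup E] [InnerProductSpace ℝ E]
    (ω σ : E) : E :=
  (1 - ⟪σ, ω⟫)⁻¹ • (σ - ⟪σ, ω⟫ • ω)

/-- The inverse stereographic projection from the point `ω`:
`Φ⁻¹(ζ) = (2ζ + (‖ζ‖² − 1)ω)/(‖ζ‖² + 1)`. -/
noncomputable def sprojInv {E : Type*} [NormedAddCommGroup E] [InnerProductSpace ℝ E]
    (ω ζ : E) : E :=
  (‖ζ‖ ^ 2 + 1)⁻¹ • ((2 : ℝ) • ζ + (‖ζ‖ ^ 2 - 1) • ω)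

set_option maxHeartbeats 1600000 in
/-- Let `E` be a 3-dimensional oriented real inner product space with cross
product `×` (characterized by `⟨x×y, z⟩` being the volume form of the orientation), `ω ∈ E` a
unit vector, `λ = a + ib ∈ ℂ` and `F_λ(ζ) = aζ + b(ω×ζ)` on `ω^⊥`.  Then for every unit
vector `σ ≠ ω`, `(a²+b²+1) + (a²+b²−1)⟨σ,ω⟩ > 0` and
`f_λ⁺(σ) := Φ⁻¹(F_λ(Φ(σ))) = [(a²+b²+1) + (a²+b²−1)⟨σ,ω⟩]⁻¹ ·
  ( 2aσ − 2b(σ×ω) − 2a⟨σ,ω⟩ω + [(a²+b²−1) + (a²+b²+1)⟨σ,ω⟩]ω )`. -/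
theorem stmt_13 {E : Type*} [NormedAddCommGroup E] [InnerProductSpace ℝ E]
    [Fact (Module.finrank ℝ E = 3)]
    (o : Orientation ℝ E (Fin 3))
    (cross : E →ₗ[ℝ] E →ₗ[ℝ] E)
    (hcross : ∀ x y z : E, ⟪cross x y, z⟫ = o.volumeForm ![x, y, z])
    (ω : E) (hω : ‖ω‖ = 1)
    (a b : ℝ) (σ : E) (hσ : ‖σ‖ = 1) (hσω : σ ≠ ω) :
    0 < (a ^ 2 + b ^ 2 + 1) + (a ^ 2 + b ^ 2 - 1) * ⟪σ, ω⟫ ∧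
    sprojInv ω (a • sproj ω σ + b • cross ω (sproj ω σ)) =
      ((a ^ 2 + b ^ 2 + 1) + (a ^ 2 + b ^ 2 - 1) * ⟪σ, ω⟫)⁻¹ •
        ((2 * a) • σ - (2 * b) • cross σ ω - (2 * a * ⟪σ, ω⟫) • ω +
          ((a ^ 2 + b ^ 2 - 1) + (a ^ 2 + b ^ 2 + 1) * ⟪σ, ω⟫) • ω) := by
  classical
  have hσσ : ⟪σ, σ⟫ = (1 : ℝ) := by
    rw [real_inner_self_eq_norm_sq, hσ]; norm_num
  have hωω2 : ⟪ω, ω⟫ = (1 : ℝ) := by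
    rw [real_inner_self_eq_norm_sq, hω]; norm_num
  set t : ℝ := ⟪σ, ω⟫ with ht
  have hωσ : ⟪ω, σ⟫ = t := by rw [real_inner_comm]
  have ht1 : t < 1 := (inner_lt_one_iff_real_of_norm_eq_one hσ hω).mpr hσω
  have ht2 : -1 ≤ t := by
    have h := abs_real_inner_le_norm σ ω
    rw [hσ, hω] at h
    have h2 := abs_le.mp (by simpa using h)
    rw [ht]; linarith [h2.1]
  have h1t : (0 : ℝ) < 1 - t := by linarith
  have h1t' : (1 : ℝ) - t ≠ 0 := ne_of_gt h1t
  set c : E := cross ω σ with hc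
  have hcω : ⟪c, ω⟫ = (0 : ℝ) := by
    rw [hc, hcross]
    exact o.volumeForm.map_eq_zero_of_eq _ (show (![ω, σ, ω] : Fin 3 → E) 0 = ![ω, σ, ω] 2 by simp)
      (by decide)
  have hcσ : ⟪c, σ⟫ = (0 : ℝ) := by
    rw [hc, hcross]
    exact o.volumeForm.map_eq_zero_of_eq _ (show (![ω, σ, σ] : Fin 3 → E) 1 = ![ω, σ, σ] 2 by simp)
      (by decide)
  have hself : cross ω ω = 0 := by
    have h : ∀ z : E, ⟪cross ω ω, z⟫ = 0 := fun z => by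
      rw [hcross]
      exact o.volumeForm.map_eq_zero_of_eq _
        (show (![ω, ω, z] : Fin 3 → E) 0 = ![ω, ω, z] 1 by simp) (by decide)
    have h2 := h (cross ω ω)
    rwa [inner_self_eq_zero] at h2
  have hanti : cross σ ω = -c := by
    have h : ∀ z : E, ⟪cross σ ω + c, z⟫ = 0 := fun z => by
      rw [inner_add_left, hc, hcross, hcross]
      have hswap := o.volumeForm.map_swap (![ω, σ, z] : Fin 3 → E)
        (show (0 : Fin 3) ≠ 1 by decide)
      have hfun : (![ω, σ, z] : Fin 3 → E) ∘ Equiv.swap (0 : Fin 3) 1 = ![σ, ω, z] := by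
        ext i
        fin_cases i <;> simp [Equiv.swap_apply_def]
      rw [hfun] at hswap
      rw [hswap]; ring
    have h2 := h (cross σ ω + c)
    rw [inner_self_eq_zero] at h2
    exact eq_neg_of_add_eq_zero_left h2
  set u : E := σ - t • ω with hu
  have hωu : ⟪ω, u⟫ = (0 : ℝ) := by
    rw [hu, inner_sub_right, real_inner_smul_right, hωσ, hωω2]; ring
  have hcu : ⟪c, u⟫ = (0 : ℝ) := by
    rw [hu, inner_sub_right, real_inner_smul_right, hcσ, hcω]; ring
  have hωc : ⟪ω, c⟫ = (0 : ℝ) := by rw [real_inner_comm]; exact hcω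
  have huω : ⟪u, ω⟫ = (0 : ℝ) := by rw [real_inner_comm]; exact hωu
  have huc : ⟪u, c⟫ = (0 : ℝ) := by rw [real_inner_comm]; exact hcu
  have hu2 : ‖u‖ ^ 2 = 1 - t ^ 2 := by
    rw [← real_inner_self_eq_norm_sq, hu]
    rw [inner_sub_left, inner_sub_right, inner_sub_right, real_inner_smul_left,
      real_inner_smul_left, real_inner_smul_right, real_inner_smul_right,
      hσσ, hωω2, hωσ, ← ht]
    ring
  have hcrossωu : cross ω u = c := by
    rw [hu, map_sub, map_smul, hself, hc]
    simp
  clear_value t c u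
  -- norm of the cross product
  have hc2 : ‖c‖ ^ 2 = 1 - t ^ 2 := by
    have hpair : Pairwise fun i j => ⟪(![ω, u, c] : Fin 3 → E) i, ![ω, u, c] j⟫ = 0 := by
      intro i j hij
      fin_cases i <;> fin_cases j <;>
        simp only [Matrix.cons_val_zero, Matrix.cons_val_one, Matrix.head_cons,
          Matrix.cons_val_two, Matrix.tail_cons, Fin.mk_zero, Fin.mk_one] <;>
        first
          | exact absurd rfl hij
          | assumption
    have habs := o.abs_volumeForm_apply_of_pairwise_orthogonal hpair
    have hvol : o.volumeForm ![ω, u, c] = ‖c‖ ^ 2 := by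
      rw [← hcross, hcrossωu, real_inner_self_eq_norm_sq]
    rw [hvol, Fin.prod_univ_three] at habs
    simp only [Matrix.cons_val_zero, Matrix.cons_val_one, Matrix.head_cons,
      Matrix.cons_val_two, Matrix.tail_cons, hω, one_mul,
      abs_of_nonneg (sq_nonneg (‖c‖))] at habs
    by_cases hc0 : ‖c‖ = 0
    · -- c = 0 : show u = 0 by testing against a vector orthogonal to ω and σ
      have h3 : Module.finrank ℝ E = 3 := Fact.out
      haveI : FiniteDimensional ℝ E := FiniteDimensional.of_finrank_pos (by omega)
      set K : Submodule ℝ E := Submodule.span ℝ {ω, σ} with hK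
      have hKle : Module.finrank ℝ K ≤ 2 := by
        refine le_trans (finrank_span_le_card ({ω, σ} : Set E)) ?_
        refine le_trans (Finset.card_le_card ?_) (Finset.card_insert_le ω {σ} |>.trans (by simp))
        intro x hx
        simp only [Set.toFinset_setOf, Set.mem_toFinset] at hx ⊢
        simpa using hx
      have hbot : Kᗮ ≠ ⊥ := by
        intro hb
        have hsum := Submodule.finrank_add_finrank_orthogonal K
        rw [hb] at hsum
        rw [finrank_bot, add_zero, h3] at hsum
        omega
      obtain ⟨z, hzK, hz0⟩ := Submodule.exists_mem_ne_zero_of_ne_bot hbot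
      have hzω : ⟪ω, z⟫ = (0 : ℝ) :=
        (Submodule.mem_orthogonal K z).mp hzK ω (Submodule.subset_span (by simp))
      have hzσ : ⟪σ, z⟫ = (0 : ℝ) :=
        (Submodule.mem_orthogonal K z).mp hzK σ (Submodule.subset_span (by simp))
      have huz : ⟪u, z⟫ = (0 : ℝ) := by
        rw [hu, inner_sub_left, real_inner_smul_left, hzω, hzσ]; ring
      have hzω' : ⟪z, ω⟫ = (0 : ℝ) := by rw [real_inner_comm]; exact hzω
      have hzu : ⟪z, u⟫ = (0 : ℝ) := by rw [real_inner_comm]; exact huz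
      have hωz : ⟪ω, z⟫ = (0 : ℝ) := hzω
      have hpair2 : Pairwise fun i j => ⟪(![ω, u, z] : Fin 3 → E) i, ![ω, u, z] j⟫ = 0 := by
        intro i j hij
        fin_cases i <;> fin_cases j <;>
          simp only [Matrix.cons_val_zero, Matrix.cons_val_one, Matrix.head_cons,
            Matrix.cons_val_two, Matrix.tail_cons, Fin.mk_zero, Fin.mk_one] <;>
          first
            | exact absurd rfl hij
            | assumption
      have habs2 := o.abs_volumeForm_apply_of_pairwise_orthogonal hpair2
      have hvol2 : o.volumeForm ![ω, u, z] = 0 := by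
        rw [← hcross, hcrossωu, show c = 0 from norm_eq_zero.mp hc0]
        simp
      rw [hvol2, Fin.prod_univ_three] at habs2
      simp only [Matrix.cons_val_zero, Matrix.cons_val_one, Matrix.head_cons,
        Matrix.cons_val_two, Matrix.tail_cons, hω, one_mul, abs_zero] at habs2
      have hzn : ‖z‖ ≠ 0 := norm_ne_zero_iff.mpr hz0
      have hun : ‖u‖ = 0 := by
        rcases mul_eq_zero.mp habs2.symm with h | h
        · exact h
        · exact absurd h hzn
      rw [hun] at hu2
      rw [hc0]
      nlinarith
    · have hcu' : ‖c‖ = ‖u‖ :=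
        mul_right_cancel₀ hc0 (by rw [← habs]; ring : ‖c‖ * ‖c‖ = ‖u‖ * ‖c‖)
      rw [hcu', hu2]
  -- positivity
  have hD : 0 < (a ^ 2 + b ^ 2 + 1) + (a ^ 2 + b ^ 2 - 1) * t := by
    nlinarith [sq_nonneg a, sq_nonneg b]
  refine ⟨hD, ?_⟩
  have hD' : (a ^ 2 + b ^ 2 + 1) + (a ^ 2 + b ^ 2 - 1) * t ≠ 0 := ne_of_gt hD
  have hζ : sproj ω σ = (1 - t)⁻¹ • u := by
    rw [sproj, hu, ht]
  have hcζ : cross ω (sproj ω σ) = (1 - t)⁻¹ • c := by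
    rw [hζ, map_smul, hcrossωu]
  have hFval : a • sproj ω σ + b • cross ω (sproj ω σ)
      = ((1 - t)⁻¹ * a) • u + ((1 - t)⁻¹ * b) • c := by
    rw [hζ, map_smul, hcrossωu]
    module
  have hF2 : ‖a • sproj ω σ + b • cross ω (sproj ω σ)‖ ^ 2
      = (a ^ 2 + b ^ 2) * (1 + t) / (1 - t) := by
    rw [hFval, ← real_inner_self_eq_norm_sq]
    rw [inner_add_left, inner_add_right, inner_add_right, real_inner_smul_left,
      real_inner_smul_left, real_inner_smul_left, real_inner_smul_left,
      real_inner_smul_right, real_inner_smul_right, real_inner_smul_right,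
      real_inner_smul_right, real_inner_self_eq_norm_sq u, real_inner_self_eq_norm_sq c,
      hu2, hc2, huc, hcu]
    field_simp
    ring
  rw [sprojInv, hF2, hFval, hanti, hu]
  have hsum : (a ^ 2 + b ^ 2) * (1 + t) / (1 - t) + 1
      = ((a ^ 2 + b ^ 2 + 1) + (a ^ 2 + b ^ 2 - 1) * t) * (1 - t)⁻¹ := by
    field_simp
    ring
  rw [hsum]
  match_scalars <;> field_simp <;> ring
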